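/- Let A, C, q ∈ ℂ with 0 < |q| < 1, and let (b_n)_{n≥0} be any sequence of complex numbers satisfying the recursion (n+3)·b_{n+1} = A·q^n·b_n + Σ_{i+j=n} b_i·b_j + C·b_n for all n ≥ 1 (where the sum is over pairs (i,j) of nonnegative integers with i + j = n). Then the power series Σ_{n≥0} b_n·w^n has a positive radius of convergence. -/

import Mathlib

/-- If `0 < |q| < 1` and `(b n)` satisfies
`(n+3) b_{n+1} = A q^n b_n + Σ_{i+j=n} b_i b_j + C b_n` for all `n ≥ 1`, then the power
series `Σ b_n w^n` has positive radius of convergence. -/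
theorem stmt8 (A C q : ℂ) (hq0 : 0 < ‖q‖) (hq1 : ‖q‖ < 1)
    (b : ℕ → ℂ)
    (hrec : ∀ n : ℕ, 1 ≤ n →
      ((n : ℂ) + 3) * b (n + 1) =
        A * q ^ n * b n + (∑ p ∈ Finset.HasAntidiagonal.antidiagonal n, b p.1 * b p.2) + C * b n) :
    ∃ r : ℝ, 0 < r ∧ ∀ w : ℂ, ‖w‖ < r → Summable (fun n : ℕ => b n * w ^ n) := by
  set M : ℝ := max (max 1 (‖b 0‖))
      (max (‖b 1‖) (‖A‖ + ‖C‖)) with hM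
  have hM1 : (1 : ℝ) ≤ M := le_trans (le_max_left _ _) (le_max_left _ _)
  have hMb0 : ‖b 0‖ ≤ M := le_trans (le_max_right _ _) (le_max_left _ _)
  have hMb1 : ‖b 1‖ ≤ M := le_trans (le_max_left _ _) (le_max_right _ _)
  have hMAC : ‖A‖ + ‖C‖ ≤ M :=
    le_trans (le_max_right _ _) (le_max_right _ _)
  have hM0 : (0 : ℝ) < M := lt_of_lt_of_le one_pos hM1
  -- key bound
  have key : ∀ n : ℕ, ‖b n‖ ≤ M ^ (n + 1) := by
    intro n
    induction n using Nat.strong_induction_on with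
    | _ n ih =>
      match n with
      | 0 => simpa using hMb0
      | 1 =>
        calc ‖b 1‖ ≤ M := hMb1
        _ = 1 * M := (one_mul M).symm
        _ ≤ M * M := by nlinarith
        _ = M ^ 2 := (sq M).symm
      | (k + 2) =>
        have hk : 1 ≤ k + 1 := Nat.le_add_left 1 k
        have h := hrec (k + 1) hk
        have habs : ((k : ℝ) + 4) * ‖b (k + 2)‖ =
            ‖A * q ^ (k + 1) * b (k + 1) +
              (∑ p ∈ Finset.HasAntidiagonal.antidiagonal (k + 1), b p.1 * b p.2) + C * b (k + 1)‖ := by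
          rw [← h, norm_mul]
          congr 1
          have : ((k + 1 : ℕ) : ℂ) + 3 = ((k : ℝ) + 4 : ℝ) := by push_cast; ring
          rw [this, Complex.norm_real, Real.norm_eq_abs, abs_of_pos (by positivity)]
        have hq : ‖q ^ (k + 1)‖ ≤ 1 := by
          rw [norm_pow]
          exact pow_le_one₀ (norm_nonneg q) hq1.le
        have hbk : ‖b (k + 1)‖ ≤ M ^ (k + 2) := ih (k + 1) (by omega)
        have hsum : ‖∑ p ∈ Finset.HasAntidiagonal.antidiagonal (k + 1), b p.1 * b p.2‖ ≤
            ((k : ℝ) + 2) * M ^ (k + 3) := by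
          calc ‖∑ p ∈ Finset.HasAntidiagonal.antidiagonal (k + 1), b p.1 * b p.2‖
              ≤ ∑ p ∈ Finset.HasAntidiagonal.antidiagonal (k + 1), ‖b p.1 * b p.2‖ :=
                norm_sum_le _ _
            _ ≤ ∑ _p ∈ Finset.HasAntidiagonal.antidiagonal (k + 1), M ^ (k + 3) := by
                apply Finset.sum_le_sum
                intro p hp
                rw [norm_mul]
                have hp12 : p.1 + p.2 = k + 1 := Finset.HasAntidiagonal.mem_antidiagonal.mp hp
                have h1 : ‖b p.1‖ ≤ M ^ (p.1 + 1) := ih p.1 (by omega)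
                have h2 : ‖b p.2‖ ≤ M ^ (p.2 + 1) := ih p.2 (by omega)
                calc ‖b p.1‖ * ‖b p.2‖
                    ≤ M ^ (p.1 + 1) * M ^ (p.2 + 1) := by
                      exact mul_le_mul h1 h2 (norm_nonneg _) (by positivity)
                  _ = M ^ (k + 3) := by rw [← pow_add]; congr 1; omega
            _ = ((k : ℝ) + 2) * M ^ (k + 3) := by
                rw [Finset.sum_const, Finset.Nat.card_antidiagonal]
                push_cast; ring
        have hA : ‖A * q ^ (k + 1) * b (k + 1)‖ ≤
            ‖A‖ * M ^ (k + 2) := by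
          rw [norm_mul, norm_mul]
          calc ‖A‖ * ‖q ^ (k + 1)‖ * ‖b (k + 1)‖
              ≤ ‖A‖ * 1 * M ^ (k + 2) := by
                apply mul_le_mul _ hbk (norm_nonneg _) (by positivity)
                exact mul_le_mul_of_nonneg_left hq (norm_nonneg _)
            _ = ‖A‖ * M ^ (k + 2) := by ring
        have hC : ‖C * b (k + 1)‖ ≤ ‖C‖ * M ^ (k + 2) := by
          rw [norm_mul]
          exact mul_le_mul_of_nonneg_left hbk (norm_nonneg _)
        have htot : ((k : ℝ) + 4) * ‖b (k + 2)‖ ≤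
            (‖A‖ + ‖C‖) * M ^ (k + 2) + ((k : ℝ) + 2) * M ^ (k + 3) := by
          rw [habs]
          calc ‖A * q ^ (k + 1) * b (k + 1) +
              (∑ p ∈ Finset.HasAntidiagonal.antidiagonal (k + 1), b p.1 * b p.2) + C * b (k + 1)‖
              ≤ ‖A * q ^ (k + 1) * b (k + 1) +
                  (∑ p ∈ Finset.HasAntidiagonal.antidiagonal (k + 1), b p.1 * b p.2)‖ +
                ‖C * b (k + 1)‖ := norm_add_le _ _
            _ ≤ (‖A * q ^ (k + 1) * b (k + 1)‖ +
                  ‖∑ p ∈ Finset.HasAntidiagonal.antidiagonal (k + 1), b p.1 * b p.2‖) +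
                ‖C * b (k + 1)‖ := by
                  gcongr; exact norm_add_le _ _
            _ ≤ (‖A‖ * M ^ (k + 2) + ((k : ℝ) + 2) * M ^ (k + 3)) +
                ‖C‖ * M ^ (k + 2) := by gcongr
            _ = (‖A‖ + ‖C‖) * M ^ (k + 2) + ((k : ℝ) + 2) * M ^ (k + 3) := by
                ring
        have hfin : ((k : ℝ) + 4) * ‖b (k + 2)‖ ≤
            ((k : ℝ) + 4) * M ^ (k + 3) := by
          have h1 : (‖A‖ + ‖C‖) * M ^ (k + 2) ≤ 2 * M ^ (k + 3) := by
            have : M ^ (k + 3) = M * M ^ (k + 2) := by rw [← pow_succ']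
            rw [this]
            nlinarith [pow_pos hM0 (k + 2), norm_nonneg A, norm_nonneg C]
          calc ((k : ℝ) + 4) * ‖b (k + 2)‖ ≤ _ := htot
            _ ≤ 2 * M ^ (k + 3) + ((k : ℝ) + 2) * M ^ (k + 3) := by gcongr
            _ = ((k : ℝ) + 4) * M ^ (k + 3) := by ring
        have hk4 : (0 : ℝ) < (k : ℝ) + 4 := by positivity
        exact le_of_mul_le_mul_left hfin hk4
  refine ⟨1 / (2 * M), by positivity, fun w hw => ?_⟩
  have hMw : M * ‖w‖ < 1 / 2 := by
    have h2 : ‖w‖ * (2 * M) < 1 := by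
      have := (lt_div_iff₀ (by positivity : (0:ℝ) < 2 * M)).mp hw
      linarith
    nlinarith [norm_nonneg w]
  apply Summable.of_norm_bounded (g := fun n => M * (M * ‖w‖) ^ n)
  · exact (summable_geometric_of_lt_one (by positivity) (by linarith)).mul_left M
  · intro n
    rw [norm_mul, norm_pow]
    calc ‖b n‖ * ‖w‖ ^ n ≤ M ^ (n + 1) * ‖w‖ ^ n := by
          gcongr
          exact key n
      _ = M * (M * ‖w‖) ^ n := by
          rw [mul_pow, pow_succ']
          ring
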